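/- Let p be an odd prime with p ∤ n. The number of solutions x with 1 ≤ x ≤ p^e(p-1), p ∤ x, to x^(x^n) ≡ x (mod p^e) equals Σ_{x0=1}^{p-1} gcd(p-1, x0^n−1) + Σ_{x0=1}^{p-1} gcd(p-1, n, x0^n−1)·(p^⌊e/2⌋ − 1). -/

import Mathlib

open Finset

lemma count_mult (r t : ℕ) (hr : 0 < r) :
    ((Finset.range (r * t)).filter (fun x => r ∣ x)).card = t := by
  have : (Finset.range (r*t)).filter (fun x => r ∣ x) = (Finset.range t).image (fun x => r * x) := by
    ext x
    simp only [mem_filter, mem_range, mem_image]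
    constructor
    · rintro ⟨hlt, k, rfl⟩
      exact ⟨k, by exact lt_of_mul_lt_mul_left hlt (le_of_lt hr), rfl⟩
    · rintro ⟨k, hk, rfl⟩
      exact ⟨by exact Nat.mul_lt_mul_left hr |>.mpr hk, ⟨k, rfl⟩⟩
  rw [this, Finset.card_image_of_injective _ (fun a b h => by
    simpa using Nat.eq_of_mul_eq_mul_left hr h), Finset.card_range]

lemma dvd_mul_iff_div_gcd {q k c : ℕ} (hq : 0 < q) :
    q ∣ k * c ↔ q / Nat.gcd q k ∣ c := by
  set g := Nat.gcd q k with hg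
  have hgpos : 0 < g := Nat.gcd_pos_of_pos_left _ hq
  have hq' : q = g * (q / g) := (Nat.mul_div_cancel' (Nat.gcd_dvd_left q k)).symm
  have hk' : k = g * (k / g) := (Nat.mul_div_cancel' (Nat.gcd_dvd_right q k)).symm
  have hco : Nat.Coprime (q / g) (k / g) := Nat.coprime_div_gcd_div_gcd hgpos
  constructor
  · intro h
    have h2 : g * (q / g) ∣ g * ((k / g) * c) := by
      rw [← hq']; rw [hk'] at h; convert h using 1; ring
    have h3 : q / g ∣ (k / g) * c := (Nat.mul_dvd_mul_iff_left hgpos).mp h2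
    exact hco.dvd_of_dvd_mul_left h3
  · intro h
    calc q = g * (q / g) := hq'
      _ ∣ k * c := mul_dvd_mul (Nat.gcd_dvd_right q k) h

/-- count of i in range q with q ∣ i * D equals gcd q D -/
lemma count_gcd (q D : ℕ) (hq : 0 < q) :
    ((Finset.range q).filter (fun i => q ∣ i * D)).card = Nat.gcd q D := by
  have hg : 0 < Nat.gcd q D := Nat.gcd_pos_of_pos_left _ hq
  have hiff : ∀ i, q ∣ i * D ↔ (q / Nat.gcd q D) ∣ i := by
    intro i
    rw [mul_comm, dvd_mul_iff_div_gcd hq]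
  have hrange : q = (q / Nat.gcd q D) * Nat.gcd q D := (Nat.div_mul_cancel (Nat.gcd_dvd_left q D)).symm
  calc ((Finset.range q).filter (fun i => q ∣ i * D)).card
      = ((Finset.range ((q / Nat.gcd q D) * Nat.gcd q D)).filter (fun i => (q / Nat.gcd q D) ∣ i)).card := by
        rw [← hrange]; exact congrArg _ (Finset.filter_congr (fun i _ => by simp [hiff i]))
    _ = Nat.gcd q D := count_mult _ _ (Nat.div_pos (Nat.le_of_dvd hq (Nat.gcd_dvd_left q D)) hg)

variable {p : ℕ} [hp : Fact p.Prime]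

lemma val_pow_succ_p (hp2 : p ≠ 2) {M : ℕ} (hM : M ≠ 0) :
    padicValNat p ((p+1)^M - 1) = 1 + padicValNat p M := by
  have hpos := hp.out.pos
  have hodd : Odd p := hp.out.odd_of_ne_two hp2
  have hnd : ¬ p ∣ p + 1 := by
    intro h
    have : p ∣ 1 := (Nat.dvd_add_right dvd_rfl).mp h
    exact absurd (Nat.le_of_dvd one_pos this) (by have := hp.out.two_le; omega)
  have h := padicValNat.pow_sub_pow (p := p) hodd (x := p+1) (y := 1)
    (by omega) (by simp) hnd hM
  simpa [padicValNat.self hp.out.one_lt] using h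

lemma pow_dvd_pow_succ_sub_one_iff (hp2 : p ≠ 2) {M f : ℕ} (hM : M ≠ 0) :
    p ^ f ∣ (p+1)^M - 1 ↔ f ≤ 1 + padicValNat p M := by
  have hpos := hp.out.pos
  have hne : (p+1)^M - 1 ≠ 0 := by
    have : p + 1 ≤ (p+1)^M := Nat.le_self_pow hM _
    omega
  rw [hp.out.pow_dvd_iff_le_factorization hne, Nat.factorization_def _ hp.out,
    val_pow_succ_p hp2 hM]

lemma coprime_succ_pow (f : ℕ) : Nat.Coprime (p+1) (p^f) :=
  (by simp [Nat.coprime_self_add_left] : Nat.Coprime (p+1) p).pow_right _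

/-- the unit (p+1) in ZMod (p^f) -/
noncomputable def unitB (f : ℕ) : (ZMod (p^f))ˣ := ZMod.unitOfCoprime (p+1) (coprime_succ_pow f)

lemma unitB_pow_eq_one_iff {f t : ℕ} (ht : t ≠ 0) (hf : f ≠ 0) :
    (unitB (p := p) f) ^ t = 1 ↔ p ^ f ∣ (p+1)^t - 1 := by
  have hpos := hp.out.pos
  rw [Units.ext_iff]
  push_cast [unitB]
  rw [show ((ZMod.unitOfCoprime (p+1) (coprime_succ_pow f) : (ZMod (p^f))ˣ) : ZMod (p^f)) = ((p+1 : ℕ) : ZMod (p^f)) by simp]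
  rw [← Nat.cast_pow, show (1 : ZMod (p^f)) = ((1:ℕ) : ZMod (p^f)) by simp,
    ZMod.natCast_eq_natCast_iff]
  rw [Nat.ModEq.comm, Nat.modEq_iff_dvd' (Nat.one_le_pow _ _ (by omega))]

lemma orderOf_unitB (hp2 : p ≠ 2) {f : ℕ} (hf : f ≠ 0) :
    orderOf (unitB (p := p) f) = p ^ (f - 1) := by
  have hpos := hp.out.pos
  have h1 : (unitB (p := p) f) ^ (p ^ (f-1)) = 1 := by
    rw [unitB_pow_eq_one_iff (by positivity) hf,
      pow_dvd_pow_succ_sub_one_iff hp2 (by positivity), padicValNat.prime_pow]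
    omega
  have hdvd : orderOf (unitB (p := p) f) ∣ p ^ (f-1) := orderOf_dvd_of_pow_eq_one h1
  obtain ⟨b, hb, hord⟩ := (Nat.dvd_prime_pow hp.out).mp hdvd
  rw [hord]
  congr 1
  by_contra hne
  have hblt : b < f - 1 := lt_of_le_of_ne hb hne
  have h2 : (unitB (p := p) f) ^ (p ^ b) = 1 := by
    rw [← hord]; exact pow_orderOf_eq_one _
  rw [unitB_pow_eq_one_iff (by positivity) hf,
    pow_dvd_pow_succ_sub_one_iff hp2 (by positivity), padicValNat.prime_pow] at h2
  omega

variable {p : ℕ} [hp : Fact p.Prime]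

lemma orderOf_g (g : (ZMod p)ˣ) (hg : ∀ x : (ZMod p)ˣ, x ∈ Subgroup.zpowers g) :
    orderOf g = p - 1 := by
  rw [orderOf_eq_card_of_forall_mem_zpowers hg, Nat.card_eq_fintype_card,
    ZMod.card_units_eq_totient, Nat.totient_prime hp.out]

noncomputable def unitA (g : (ZMod p)ˣ) (e : ℕ) : (ZMod (p^e))ˣ :=
  (ZMod.unitOfCoprime ((g : ZMod p)).val
    ((ZMod.val_coe_unit_coprime g).pow_right e) : (ZMod (p^e))ˣ) ^ (p^(e-1))

lemma unitsMap_base (g : (ZMod p)ˣ) {e : ℕ} (he : 1 ≤ e) :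
    ZMod.unitsMap (dvd_pow_self p (by omega) : p ∣ p^e)
      (ZMod.unitOfCoprime ((g : ZMod p)).val ((ZMod.val_coe_unit_coprime g).pow_right e)) = g := by
  apply Units.ext
  simp [ZMod.unitsMap_def, ZMod.natCast_val, ZMod.cast_natCast, ZMod.cast_id]

lemma coprime_pm1_ppow (k : ℕ) : Nat.Coprime (p - 1) (p ^ k) := by
  have hpos := hp.out.pos
  apply Nat.Coprime.pow_right
  have h : (p - 1) + 1 = p := by omega
  have : Nat.Coprime (p-1) ((p-1)+1) := by simp
  rwa [h] at this

lemma card_units_ppow {e : ℕ} (he : 1 ≤ e) :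
    Fintype.card (ZMod (p^e))ˣ = p^(e-1) * (p-1) := by
  have : NeZero (p ^ e) := ⟨pow_ne_zero _ hp.out.ne_zero⟩
  rw [ZMod.card_units_eq_totient, Nat.totient_prime_pow hp.out (by omega)]

lemma unitA_pow_eq_one {e : ℕ} (g : (ZMod p)ˣ) (he : 1 ≤ e) :
    (unitA g e) ^ (p - 1) = 1 := by
  rw [unitA, ← pow_mul]
  rw [show p^(e-1) * (p-1) = Fintype.card (ZMod (p^e))ˣ from (card_units_ppow he).symm]
  exact pow_card_eq_one

lemma orderOf_unitsMap_unitA (g : (ZMod p)ˣ) (hg : ∀ x : (ZMod p)ˣ, x ∈ Subgroup.zpowers g)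
    {e f : ℕ} (he : 1 ≤ e) (hf1 : 1 ≤ f) (hfe : f ≤ e) :
    orderOf (ZMod.unitsMap (pow_dvd_pow p hfe) (unitA g e)) = p - 1 := by
  have hpos := hp.out.pos
  have hdvd1 : orderOf (ZMod.unitsMap (pow_dvd_pow p hfe) (unitA g e)) ∣ p - 1 := by
    apply orderOf_dvd_of_pow_eq_one
    rw [← map_pow, unitA_pow_eq_one g he, map_one]
  have himg : ZMod.unitsMap (dvd_pow_self p (by omega : f ≠ 0))
      (ZMod.unitsMap (pow_dvd_pow p hfe) (unitA g e)) = g ^ (p^(e-1)) := by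
    rw [← MonoidHom.comp_apply, ZMod.unitsMap_comp, unitA, map_pow]
    rw [show ZMod.unitsMap (dvd_trans (dvd_pow_self p (by omega : f ≠ 0)) (pow_dvd_pow p hfe)) =
      ZMod.unitsMap (dvd_pow_self p (by omega : e ≠ 0)) from rfl]
    rw [unitsMap_base g he]
  have hdvd2 : p - 1 ∣ orderOf (ZMod.unitsMap (pow_dvd_pow p hfe) (unitA g e)) := by
    have h1 : orderOf (g ^ (p^(e-1))) = p - 1 := by
      rw [orderOf_pow, orderOf_g g hg, Nat.Coprime.gcd_eq_one (coprime_pm1_ppow (e-1)), Nat.div_one]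
    calc p - 1 = orderOf (g ^ (p^(e-1))) := h1.symm
      _ ∣ _ := himg ▸ orderOf_map_dvd _ _
  exact Nat.dvd_antisymm hdvd1 hdvd2


variable {p : ℕ} [hp : Fact p.Prime]

lemma unitsMap_unitB {e f : ℕ} (hfe : f ≤ e) :
    ZMod.unitsMap (pow_dvd_pow p hfe) (unitB (p := p) e) = unitB f := by
  apply Units.ext
  rw [ZMod.unitsMap_def]
  show (ZMod.castHom (pow_dvd_pow p hfe) (ZMod (p^f))) ((ZMod.unitOfCoprime _ _ : (ZMod (p^e))ˣ) : ZMod (p^e)) = _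
  rw [ZMod.coe_unitOfCoprime, map_natCast, unitB, ZMod.coe_unitOfCoprime]

lemma rep_inj (g : (ZMod p)ˣ) (hg : ∀ x : (ZMod p)ˣ, x ∈ Subgroup.zpowers g)
    (hp2 : p ≠ 2) {e i j i' j' : ℕ} (he : 1 ≤ e)
    (hi : i < p - 1) (hj : j < p^(e-1)) (hi' : i' < p - 1) (hj' : j' < p^(e-1))
    (h : (unitA g e)^i * (unitB e)^j = (unitA g e)^i' * (unitB e)^j') :
    i = i' ∧ j = j' := by
  have hpos := hp.out.pos
  set A := unitA g e
  set B := unitB (p := p) e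
  have hordA : orderOf A = p - 1 := by
    have h0 := orderOf_unitsMap_unitA g hg he he (le_refl e)
    rwa [show (pow_dvd_pow p (le_refl e) : p^e ∣ p^e) = dvd_refl (p^e) from rfl,
      ZMod.unitsMap_self, MonoidHom.id_apply] at h0
  have hordB : orderOf B = p ^ (e-1) := orderOf_unitB hp2 (by omega)
  have hz : A^i / A^i' = B^j' / B^j := by
    rw [div_eq_div_iff_mul_eq_mul, h, mul_comm]
  have hz1 : (A^i / A^i') ^ (p-1) = 1 := by
    rw [div_pow, ← pow_mul, ← pow_mul, mul_comm i, mul_comm i', pow_mul, pow_mul,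
      ← hordA, pow_orderOf_eq_one, one_pow, one_pow, div_one]
  have hz2 : (A^i / A^i') ^ (p^(e-1)) = 1 := by
    rw [hz, div_pow, ← pow_mul, ← pow_mul, mul_comm j, mul_comm j', pow_mul, pow_mul,
      ← hordB, pow_orderOf_eq_one, one_pow, one_pow, div_one]
  have hone : A^i / A^i' = 1 := by
    have hd : orderOf (A^i / A^i') ∣ Nat.gcd (p-1) (p^(e-1)) :=
      Nat.dvd_gcd (orderOf_dvd_of_pow_eq_one hz1) (orderOf_dvd_of_pow_eq_one hz2)
    rw [Nat.Coprime.gcd_eq_one (coprime_pm1_ppow (e-1)), Nat.dvd_one] at hd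
    exact orderOf_eq_one_iff.mp hd
  have hA : A^i = A^i' := by
    have := div_eq_one.mp hone; exact this
  have hB : B^j = B^j' := by
    rw [hA] at h; exact mul_left_cancel h
  constructor
  · exact pow_injOn_Iio_orderOf (Set.mem_Iio.mpr (lt_of_lt_of_eq hi hordA.symm))
      (Set.mem_Iio.mpr (lt_of_lt_of_eq hi' hordA.symm)) hA
  · exact pow_injOn_Iio_orderOf (Set.mem_Iio.mpr (lt_of_lt_of_eq hj hordB.symm))
      (Set.mem_Iio.mpr (lt_of_lt_of_eq hj' hordB.symm)) hB

lemma rep_exists (g : (ZMod p)ˣ) (hg : ∀ x : (ZMod p)ˣ, x ∈ Subgroup.zpowers g)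
    (hp2 : p ≠ 2) {e : ℕ} (he : 1 ≤ e) (u : (ZMod (p^e))ˣ) :
    ∃ i j : ℕ, i < p - 1 ∧ j < p^(e-1) ∧ u = (unitA g e)^i * (unitB e)^j := by
  have hpos := hp.out.pos
  classical
  have himg : ((range (p-1)) ×ˢ (range (p^(e-1)))).image
      (fun ij => (unitA g e)^ij.1 * (unitB (p := p) e)^ij.2) = Finset.univ := by
    apply Finset.eq_univ_of_card
    rw [Finset.card_image_of_injOn, Finset.card_product, Finset.card_range, Finset.card_range,
      card_units_ppow he]
    · ring
    · intro a ha b hb hab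
      rw [Finset.mem_coe, Finset.mem_product, Finset.mem_range, Finset.mem_range] at ha hb
      obtain ⟨h1, h2⟩ := rep_inj g hg hp2 he ha.1 ha.2 hb.1 hb.2 hab
      exact Prod.ext h1 h2
  have : u ∈ Finset.univ := Finset.mem_univ u
  rw [← himg, Finset.mem_image] at this
  obtain ⟨⟨i, j⟩, hmem, heq⟩ := this
  simp only [Finset.mem_product, Finset.mem_range] at hmem
  exact ⟨i, j, hmem.1, hmem.2, heq.symm⟩

lemma modeq_sub_one {a b m : ℕ} (h : a ≡ b [MOD m]) (ha : 1 ≤ a) (hb : 1 ≤ b) :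
    a - 1 ≡ b - 1 [MOD m] := by
  apply Nat.ModEq.add_right_cancel' 1
  have h1 : a - 1 + 1 = a := by omega
  have h2 : b - 1 + 1 = b := by omega
  rw [h1, h2]; exact h

lemma dvd_iff_of_modeq {a b d : ℕ} (h : a ≡ b [MOD d]) : d ∣ a ↔ d ∣ b := by
  constructor
  · intro hd
    exact (Nat.modEq_zero_iff_dvd).mp (h.symm.trans ((Nat.modEq_zero_iff_dvd).mpr hd))
  · intro hd
    exact (Nat.modEq_zero_iff_dvd).mp (h.trans ((Nat.modEq_zero_iff_dvd).mpr hd))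

lemma eq_of_modeq_interval {a b q : ℕ} (h1 : 1 ≤ a) (h2 : a ≤ q) (h3 : 1 ≤ b) (h4 : b ≤ q)
    (h : a ≡ b [MOD q]) : a = b := by
  rcases le_total a b with hab | hab
  · rcases Nat.eq_or_lt_of_le hab with heq | hlt
    · exact heq
    · have hd := (Nat.modEq_iff_dvd' hab).mp h
      have := Nat.le_of_dvd (by omega) hd
      omega
  · rcases Nat.eq_or_lt_of_le hab with heq | hlt
    · exact heq.symm
    · have hd := (Nat.modEq_iff_dvd' hab).mp h.symm
      have := Nat.le_of_dvd (by omega) hd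
      omega

lemma orderOf_unitA (g : (ZMod p)ˣ) (hg : ∀ x : (ZMod p)ˣ, x ∈ Subgroup.zpowers g)
    {e : ℕ} (he : 1 ≤ e) : orderOf (unitA g e) = p - 1 := by
  have h0 := orderOf_unitsMap_unitA g hg he he (le_refl e)
  rwa [show (pow_dvd_pow p (le_refl e) : p^e ∣ p^e) = dvd_refl (p^e) from rfl,
    ZMod.unitsMap_self, MonoidHom.id_apply] at h0

lemma main_equiv (g : (ZMod p)ˣ) (hg : ∀ x : (ZMod p)ˣ, x ∈ Subgroup.zpowers g)
    (hp2 : p ≠ 2) {e n : ℕ} (he : 1 ≤ e) (hn : 0 < n) (hpn : ¬ p ∣ n)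
    {x i j y : ℕ} (hx1 : 1 ≤ x) (hy1 : 1 ≤ y)
    (hxu : (x : ZMod (p^e)) = ((unitA g e)^i * (unitB e)^j : (ZMod (p^e))ˣ))
    (hxy : x ≡ y [MOD p - 1]) :
    ((x : ZMod (p^e)) ^ (x ^ n) = (x : ZMod (p^e)))
      ↔ ((p-1) ∣ i * (y^n - 1) ∧
         (p^(e-1) ∣ j ∨ (p^(e-1-e/2) ∣ j ∧ (p-1) ∣ i * n))) := by
  have hpos := hp.out.pos
  have hp3 : 3 ≤ p := by
    have := hp.out.two_le; omega
  have hq : 0 < p - 1 := by omega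
  set A := unitA g e with hA
  set B := unitB (p := p) e with hB
  set u := A^i * B^j with hu
  have hordA : orderOf A = p - 1 := orderOf_unitA g hg he
  have hordB : orderOf B = p^(e-1) := orderOf_unitB hp2 (by omega)
  have hxpow : 1 ≤ x^n := Nat.one_le_pow _ _ (by omega)
  -- step 1
  have step1 : ((x : ZMod (p^e)) ^ (x ^ n) = (x : ZMod (p^e))) ↔ orderOf u ∣ x^n - 1 := by
    rw [hxu, ← Units.val_pow_eq_pow_val, Units.val_inj]
    rw [show (u ^ (x^n) = u) ↔ (u ^ (x^n) = u ^ 1) by rw [pow_one]]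
    rw [pow_eq_pow_iff_modEq]
    rw [show (x^n ≡ 1 [MOD orderOf u]) ↔ (1 ≡ x^n [MOD orderOf u]) from ⟨Nat.ModEq.symm, Nat.ModEq.symm⟩]
    rw [Nat.modEq_iff_dvd' hxpow]
  -- step 2
  have hco : Nat.Coprime (orderOf (A^i)) (orderOf (B^j)) :=
    Nat.Coprime.coprime_dvd_left (hordA ▸ orderOf_pow_dvd i)
      (Nat.Coprime.coprime_dvd_right (hordB ▸ orderOf_pow_dvd j) (coprime_pm1_ppow (e-1)))
  have step2 : orderOf u = orderOf (A^i) * orderOf (B^j) :=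
    (Commute.all _ _).orderOf_mul_eq_mul_orderOf_of_coprime hco
  have step3 : orderOf u ∣ x^n - 1 ↔ (orderOf (A^i) ∣ x^n - 1 ∧ orderOf (B^j) ∣ x^n - 1) := by
    rw [step2]
    constructor
    · intro h
      exact ⟨(dvd_mul_right _ _).trans h, (dvd_mul_left _ _).trans h⟩
    · rintro ⟨h1, h2⟩
      exact hco.mul_dvd_of_dvd_of_dvd h1 h2
  -- step 4
  have hmodeq : x^n - 1 ≡ y^n - 1 [MOD p - 1] :=
    modeq_sub_one (hxy.pow n) hxpow (Nat.one_le_pow _ _ (by omega))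
  have step4 : orderOf (A^i) ∣ x^n - 1 ↔ (p-1) ∣ i * (y^n - 1) := by
    rw [orderOf_pow, hordA]
    have hdvd : (p-1) / Nat.gcd (p-1) i ∣ p - 1 := Nat.div_dvd_of_dvd (Nat.gcd_dvd_left _ _)
    rw [dvd_iff_of_modeq (hmodeq.of_dvd hdvd)]
    rw [dvd_mul_iff_div_gcd hq]
  -- step 5
  have step5 : orderOf (B^j) ∣ x^n - 1 ↔
      (p^(e-1) ∣ j ∨ (p^(e-1-e/2) ∣ j ∧ (p-1) ∣ i * n)) := by
    rw [orderOf_pow, hordB]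
    obtain ⟨w, hwle, hw⟩ := (Nat.dvd_prime_pow hp.out).mp (Nat.gcd_dvd_left (p^(e-1)) j)
    by_cases hj : p^(e-1) ∣ j
    · rw [Nat.gcd_eq_left hj, Nat.div_self (by positivity)]
      simp [hj]
    · have hwlt : w < e - 1 := by
        rcases Nat.lt_or_ge w (e-1) with h | h
        · exact h
        · exfalso
          have : w = e - 1 := le_antisymm hwle h
          rw [this] at hw
          exact hj (hw ▸ Nat.gcd_dvd_right (p^(e-1)) j)
      set a := e - 1 - w with ha
      have ha1 : 1 ≤ a := by omega
      have hae : a ≤ e := by omega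
      have hdvdpow : (p:ℕ)^a ∣ p^e := pow_dvd_pow p hae
      have hdB : p^(e-1) / Nat.gcd (p^(e-1)) j = p^a := by
        rw [hw, Nat.pow_div hwle hpos]
      rw [hdB]
      -- (i) p^a ∣ x^n - 1 ↔ (x : ZMod p^a)^n = 1
      have hi0 : p^a ∣ x^n - 1 ↔ ((x : ZMod (p^a)))^n = 1 := by
        rw [← Nat.modEq_iff_dvd' hxpow,
          show ((1:ℕ) ≡ x^n [MOD p^a]) ↔ (x^n ≡ 1 [MOD p^a]) from ⟨Nat.ModEq.symm, Nat.ModEq.symm⟩,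
          ← ZMod.natCast_eq_natCast_iff]
        push_cast
        rfl
      -- (ii)
      have hii : (x : ZMod (p^a)) = ((ZMod.unitsMap (pow_dvd_pow p hae) u : (ZMod (p^a))ˣ) : ZMod (p^a)) := by
        have h1 : (x : ZMod (p^a)) = ((ZMod.castHom (pow_dvd_pow p hae) (ZMod (p^a))) ((x : ZMod (p^e)))) := by
          rw [map_natCast]
        rw [h1, hxu]
        rfl
      -- images
      set Abar := ZMod.unitsMap (pow_dvd_pow p hae) A with hAbar
      set Bbar := unitB (p := p) a with hBbar
      have humap : ZMod.unitsMap (pow_dvd_pow p hae) u = Abar^i * Bbar^j := by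
        rw [hu, map_mul, map_pow, map_pow, hAbar, hBbar, ← unitsMap_unitB hae]
      have hordAbar : orderOf Abar = p - 1 := orderOf_unitsMap_unitA g hg he ha1 hae
      have hordBbar : orderOf Bbar = p^(a-1) := orderOf_unitB hp2 (by omega)
      -- (v)
      have hv : (x : ZMod (p^a))^n = 1 ↔ (Abar^(i*n) = 1 ∧ Bbar^(j*n) = 1) := by
        rw [hii, ← Units.val_pow_eq_pow_val,
          show (1 : ZMod (p^a)) = ((1 : (ZMod (p^a))ˣ) : ZMod (p^a)) from rfl, Units.val_inj]
        rw [humap, mul_pow, ← pow_mul, ← pow_mul]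
        constructor
        · intro h1
          have hz : Abar^(i*n) = (Bbar^(j*n))⁻¹ := eq_inv_of_mul_eq_one_left h1
          have hda : orderOf (Abar^(i*n)) ∣ p - 1 := hordAbar ▸ orderOf_pow_dvd _
          have hdb : orderOf (Abar^(i*n)) ∣ p^(a-1) := by
            rw [hz, orderOf_inv]
            exact hordBbar ▸ orderOf_pow_dvd _
          have : orderOf (Abar^(i*n)) = 1 := Nat.eq_one_of_dvd_coprimes (coprime_pm1_ppow (a-1)) hda hdb
          have hA1 : Abar^(i*n) = 1 := orderOf_eq_one_iff.mp this
          rw [hA1, one_mul] at h1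
          exact ⟨hA1, h1⟩
        · rintro ⟨h1, h2⟩
          rw [h1, h2, one_mul]
      -- (vi)
      have hvi : Abar^(i*n) = 1 ↔ (p-1) ∣ i * n := by
        rw [← orderOf_dvd_iff_pow_eq_one, hordAbar]
      -- (vii)
      have hvii : Bbar^(j*n) = 1 ↔ p^(a-1) ∣ j := by
        rw [← orderOf_dvd_iff_pow_eq_one, hordBbar]
        constructor
        · intro h
          exact (Nat.Coprime.dvd_of_dvd_mul_right
            (((hp.out.coprime_iff_not_dvd).mpr hpn).pow_left _) h)
        · intro h
          exact h.mul_right n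
      -- (viii)
      have hviii : p^(a-1) ∣ j ↔ p^(e-1-e/2) ∣ j := by
        have key : ∀ t, t ≤ e - 1 → ((p:ℕ)^t ∣ j ↔ t ≤ w) := by
          intro t ht
          rw [show ((p:ℕ)^t ∣ j) ↔ ((p:ℕ)^t ∣ p^(e-1) ∧ (p:ℕ)^t ∣ j) from
            ⟨fun h => ⟨pow_dvd_pow p ht, h⟩, fun h => h.2⟩, ← Nat.dvd_gcd_iff, hw,
            Nat.pow_dvd_pow_iff_le_right hp.out.one_lt]
        rw [key _ (by omega), key _ (by omega)]
        omega
      rw [hi0, hv, hvi, hvii, hviii]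
      have : ¬ ((p:ℕ)^(e-1) ∣ j) := hj
      constructor
      · rintro ⟨h1, h2⟩; exact Or.inr ⟨h2, h1⟩
      · rintro (h | ⟨h1, h2⟩)
        · exact absurd h this
        · exact ⟨h2, h1⟩
  rw [step1, step3, step4, step5]

lemma filter_prod_card (s t : Finset ℕ) (P Q : ℕ → Prop) [DecidablePred P] [DecidablePred Q] :
    ((s ×ˢ t).filter (fun ij => P ij.1 ∧ Q ij.2)).card = (s.filter P).card * (t.filter Q).card := by
  simp only [Finset.filter_product, Finset.card_product]

lemma county {e : ℕ} (he : 1 ≤ e) (n D : ℕ) :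
    (((range (p-1)) ×ˢ (range (p^(e-1)))).filter
      (fun ij : ℕ × ℕ => (p-1) ∣ ij.1 * D ∧
        (p^(e-1) ∣ ij.2 ∨ (p^(e-1-e/2) ∣ ij.2 ∧ (p-1) ∣ ij.1 * n)))).card
    = Nat.gcd (p-1) D + Nat.gcd (p-1) (Nat.gcd n D) * (p^(e/2) - 1) := by
  have hpos := hp.out.pos
  have hp2le := hp.out.two_le
  have hq : 0 < p - 1 := by omega
  have hce : (e-1-e/2) + e/2 = e - 1 := by omega
  -- key sub-iff
  have subiff : ∀ i : ℕ, (p-1) ∣ i * Nat.gcd n D ↔ ((p-1) ∣ i * n ∧ (p-1) ∣ i * D) := by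
    intro i
    rw [dvd_mul_iff_div_gcd hq, dvd_mul_iff_div_gcd hq, dvd_mul_iff_div_gcd hq, Nat.dvd_gcd_iff]
  have hpredeq : ∀ ij : ℕ × ℕ, ((p-1) ∣ ij.1 * D ∧
        (p^(e-1) ∣ ij.2 ∨ (p^(e-1-e/2) ∣ ij.2 ∧ (p-1) ∣ ij.1 * n)))
      ↔ (((p-1) ∣ ij.1 * D ∧ p^(e-1) ∣ ij.2) ∨
         ((p-1) ∣ ij.1 * Nat.gcd n D ∧ p^(e-1-e/2) ∣ ij.2)) := by
    intro ij
    rw [subiff]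
    tauto
  rw [Finset.filter_congr (fun ij _ => hpredeq ij)]
  rw [Finset.filter_or]
  have hcount1 : (((range (p-1)) ×ˢ (range (p^(e-1)))).filter
      (fun ij : ℕ × ℕ => (p-1) ∣ ij.1 * D ∧ p^(e-1) ∣ ij.2)).card = Nat.gcd (p-1) D * 1 := by
    rw [filter_prod_card (range (p-1)) (range (p^(e-1))) (fun i => (p-1) ∣ i * D) (fun j => p^(e-1) ∣ j),
      count_gcd _ _ hq]
    congr 1
    have : (range (p^(e-1))).filter (fun j => p^(e-1) ∣ j)
        = (range (p^(e-1) * 1)).filter (fun j => p^(e-1) ∣ j) := by rw [mul_one]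
    rw [this, count_mult _ _ (by positivity)]
  have hcount2 : (((range (p-1)) ×ˢ (range (p^(e-1)))).filter
      (fun ij : ℕ × ℕ => (p-1) ∣ ij.1 * Nat.gcd n D ∧ p^(e-1-e/2) ∣ ij.2)).card
      = Nat.gcd (p-1) (Nat.gcd n D) * p^(e/2) := by
    rw [filter_prod_card (range (p-1)) (range (p^(e-1))) (fun i => (p-1) ∣ i * Nat.gcd n D) (fun j => p^(e-1-e/2) ∣ j),
      count_gcd _ _ hq]
    congr 1
    have : (range (p^(e-1))).filter (fun j => p^(e-1-e/2) ∣ j)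
        = (range (p^(e-1-e/2) * p^(e/2))).filter (fun j => p^(e-1-e/2) ∣ j) := by
      rw [← pow_add, hce]
    rw [this, count_mult _ _ (by positivity)]
  have hcount3 : ((((range (p-1)) ×ˢ (range (p^(e-1)))).filter
      (fun ij : ℕ × ℕ => (p-1) ∣ ij.1 * D ∧ p^(e-1) ∣ ij.2)) ∩
      (((range (p-1)) ×ˢ (range (p^(e-1)))).filter
      (fun ij : ℕ × ℕ => (p-1) ∣ ij.1 * Nat.gcd n D ∧ p^(e-1-e/2) ∣ ij.2))).card
      = Nat.gcd (p-1) (Nat.gcd n D) * 1 := by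
    rw [← Finset.filter_and]
    have : ∀ ij : ℕ × ℕ, (((p-1) ∣ ij.1 * D ∧ p^(e-1) ∣ ij.2) ∧
        ((p-1) ∣ ij.1 * Nat.gcd n D ∧ p^(e-1-e/2) ∣ ij.2))
        ↔ ((p-1) ∣ ij.1 * Nat.gcd n D ∧ p^(e-1) ∣ ij.2) := by
      intro ij
      constructor
      · rintro ⟨⟨h1, h2⟩, ⟨h3, h4⟩⟩; exact ⟨h3, h2⟩
      · rintro ⟨h1, h2⟩
        obtain ⟨h3, h4⟩ := (subiff ij.1).mp h1
        exact ⟨⟨h4, h2⟩, ⟨h1, (pow_dvd_pow p (by omega : e-1-e/2 ≤ e-1)).trans h2⟩⟩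
    rw [Finset.filter_congr (fun ij _ => this ij)]
    rw [filter_prod_card (range (p-1)) (range (p^(e-1))) (fun i => (p-1) ∣ i * Nat.gcd n D) (fun j => p^(e-1) ∣ j),
      count_gcd _ _ hq]
    congr 1
    have : (range (p^(e-1))).filter (fun j => p^(e-1) ∣ j)
        = (range (p^(e-1) * 1)).filter (fun j => p^(e-1) ∣ j) := by rw [mul_one]
    rw [this, count_mult _ _ (by positivity)]
  have hkey := Finset.card_union_add_card_inter
    (((range (p-1)) ×ˢ (range (p^(e-1)))).filter
      (fun ij : ℕ × ℕ => (p-1) ∣ ij.1 * D ∧ p^(e-1) ∣ ij.2))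
    (((range (p-1)) ×ˢ (range (p^(e-1)))).filter
      (fun ij : ℕ × ℕ => (p-1) ∣ ij.1 * Nat.gcd n D ∧ p^(e-1-e/2) ∣ ij.2))
  rw [hcount1, hcount2, hcount3] at hkey
  have hPpos : 1 ≤ p^(e/2) := Nat.one_le_pow _ _ hpos
  have hmul : Nat.gcd (p-1) (Nat.gcd n D) * (p^(e/2) - 1)
      = Nat.gcd (p-1) (Nat.gcd n D) * p^(e/2) - Nat.gcd (p-1) (Nat.gcd n D) * 1 :=
    Nat.mul_sub _ _ _
  have hle : Nat.gcd (p-1) (Nat.gcd n D) * 1 ≤ Nat.gcd (p-1) (Nat.gcd n D) * p^(e/2) :=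
    Nat.mul_le_mul_left _ hPpos
  omega

theorem stmt_8 (p n e : ℕ) [Fact p.Prime] (hp2 : p ≠ 2) (hn : 0 < n)
    (hpn : ¬ p ∣ n) (he : 1 ≤ e) :
    ((Finset.Icc 1 (p ^ e * (p - 1))).filter fun x : ℕ =>
        ¬ p ∣ x ∧ (x : ZMod (p ^ e)) ^ (x ^ n) = (x : ZMod (p ^ e))).card =
      (∑ x0 ∈ Finset.Icc 1 (p - 1), Nat.gcd (p - 1) (x0 ^ n - 1)) +
      (∑ x0 ∈ Finset.Icc 1 (p - 1), Nat.gcd (p - 1) (Nat.gcd n (x0 ^ n - 1))) *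
        (p ^ (e / 2) - 1) := by
  have hppr : p.Prime := Fact.out
  have hp3 : 3 ≤ p := by have := hppr.two_le; omega
  have hq : 0 < p - 1 := by omega
  have hpe : (0:ℕ) < p^e := pow_pos hppr.pos e
  haveI : Fact (1 < p^e) := ⟨Nat.one_lt_pow (by omega) hppr.one_lt⟩
  have cop : Nat.Coprime (p^e) (p-1) := by
    apply Nat.Coprime.pow_left
    rw [Nat.coprime_comm]
    apply Nat.Coprime.symm
    rw [hppr.coprime_iff_not_dvd]
    intro hdvd
    have := Nat.le_of_dvd hq hdvd
    omega
  obtain ⟨g, hg⟩ := IsCyclic.exists_generator (α := (ZMod p)ˣ)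
  -- the CRT lift
  set X : ℕ → ℕ → ℕ → ℕ := fun i j y =>
    (Nat.chineseRemainder cop ((((unitA g e)^i * (unitB e)^j : (ZMod (p^e))ˣ) : ZMod (p^e)).val) y : ℕ)
    with hXdef
  have hX1 : ∀ i j y, ((X i j y : ℕ) : ZMod (p^e))
      = (((unitA g e)^i * (unitB e)^j : (ZMod (p^e))ˣ) : ZMod (p^e)) := by
    intro i j y
    have h := (Nat.chineseRemainder cop ((((unitA g e)^i * (unitB e)^j : (ZMod (p^e))ˣ) : ZMod (p^e)).val) y).2.1
    have h2 : ((X i j y : ℕ) : ZMod (p^e))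
        = (((((unitA g e)^i * (unitB e)^j : (ZMod (p^e))ˣ) : ZMod (p^e)).val : ℕ) : ZMod (p^e)) :=
      (ZMod.natCast_eq_natCast_iff _ _ _).mpr h
    rw [h2, ZMod.natCast_val, ZMod.cast_id]
  have hX2 : ∀ i j y, X i j y ≡ y [MOD p-1] := fun i j y =>
    (Nat.chineseRemainder cop _ y).2.2
  have hX3 : ∀ i j y, X i j y < p^e * (p-1) := fun i j y =>
    Nat.chineseRemainder_lt_mul cop _ y (by positivity) (by omega)
  have hXunit : ∀ i j y, IsUnit ((X i j y : ℕ) : ZMod (p^e)) := by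
    intro i j y; rw [hX1]; exact Units.isUnit _
  have hX0 : ∀ i j y, 1 ≤ X i j y := by
    intro i j y
    rcases Nat.eq_zero_or_pos (X i j y) with h0 | h1
    · exfalso
      have := hXunit i j y
      rw [h0] at this
      simp only [Nat.cast_zero] at this
      exact not_isUnit_zero this
    · exact h1
  have hX5 : ∀ i j y, ¬ p ∣ X i j y := by
    intro i j y hdvd
    have hu := hXunit i j y
    have hco := ZMod.val_coe_unit_coprime hu.unit
    have hval : ((hu.unit : (ZMod (p^e))ˣ) : ZMod (p^e)).val = X i j y % p^e := by
      rw [IsUnit.unit_spec, ZMod.val_natCast]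
    rw [hval] at hco
    have hdvd2 : p ∣ X i j y % p^e :=
      (Nat.dvd_mod_iff (dvd_pow_self p (by omega : e ≠ 0))).mpr hdvd
    have : p ∣ 1 := hco ▸ Nat.dvd_gcd hdvd2 (dvd_pow_self p (by omega : e ≠ 0))
    have := Nat.le_of_dvd one_pos this
    omega
  -- the bijection
  have hbij : ((Finset.Icc 1 (p ^ e * (p - 1))).filter fun x : ℕ =>
        ¬ p ∣ x ∧ (x : ZMod (p ^ e)) ^ (x ^ n) = (x : ZMod (p ^ e))).card
      = ((((range (p-1)) ×ˢ (range (p^(e-1)))) ×ˢ (Icc 1 (p-1))).filter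
          (fun z : (ℕ × ℕ) × ℕ => (p-1) ∣ z.1.1 * (z.2^n - 1) ∧
            (p^(e-1) ∣ z.1.2 ∨ (p^(e-1-e/2) ∣ z.1.2 ∧ (p-1) ∣ z.1.1 * n)))).card := by
    symm
    apply Finset.card_bij (fun z _ => X z.1.1 z.1.2 z.2)
    · -- membership
      rintro ⟨⟨i, j⟩, y⟩ hz
      simp only [mem_filter, mem_product, mem_range, mem_Icc] at hz ⊢
      obtain ⟨⟨⟨hi, hj⟩, hy1, hy2⟩, hcond⟩ := hz
      refine ⟨⟨hX0 i j y, Nat.le_of_lt (hX3 i j y) |>.trans (le_refl _)⟩, hX5 i j y, ?_⟩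
      exact (main_equiv g hg hp2 he hn hpn (hX0 i j y) hy1 (hX1 i j y) (hX2 i j y)).mpr hcond
    · -- injectivity
      rintro ⟨⟨i, j⟩, y⟩ h1 ⟨⟨i', j'⟩, y'⟩ h2 heq
      simp only [mem_filter, mem_product, mem_range, mem_Icc] at h1 h2
      obtain ⟨⟨⟨hi, hj⟩, hy1, hy2⟩, _⟩ := h1
      obtain ⟨⟨⟨hi', hj'⟩, hy1', hy2'⟩, _⟩ := h2
      have hcast : (((unitA g e)^i * (unitB e)^j : (ZMod (p^e))ˣ) : ZMod (p^e))
          = (((unitA g e)^i' * (unitB e)^j' : (ZMod (p^e))ˣ) : ZMod (p^e)) := by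
        rw [← hX1 i j y, ← hX1 i' j' y', heq]
      have huniteq : ((unitA g e)^i * (unitB e)^j : (ZMod (p^e))ˣ)
          = ((unitA g e)^i' * (unitB e)^j' : (ZMod (p^e))ˣ) := Units.val_inj.mp hcast
      obtain ⟨hii, hjj⟩ := rep_inj g hg hp2 he hi hj hi' hj' huniteq
      have hyy : y = y' := by
        apply eq_of_modeq_interval hy1 hy2 hy1' hy2'
        calc y ≡ X i j y [MOD p-1] := (hX2 i j y).symm
          _ ≡ X i' j' y' [MOD p-1] := by rw [heq]
          _ ≡ y' [MOD p-1] := hX2 i' j' y'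
      simp [hii, hjj, hyy]
    · -- surjectivity
      intro x hx
      simp only [mem_filter, mem_Icc] at hx
      obtain ⟨⟨hx1, hx2⟩, hpx, hcond⟩ := hx
      have hux : IsUnit ((x : ℕ) : ZMod (p^e)) := by
        rw [ZMod.isUnit_iff_coprime]
        apply Nat.Coprime.pow_right
        rw [Nat.coprime_comm]
        exact (hppr.coprime_iff_not_dvd).mpr hpx
      obtain ⟨i, j, hi, hj, hu⟩ := rep_exists g hg hp2 he hux.unit
      set y := (x - 1) % (p-1) + 1 with hy
      have hy1 : 1 ≤ y := by omega
      have hy2 : y ≤ p - 1 := by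
        have := Nat.mod_lt (x-1) hq
        omega
      have hyx : x ≡ y [MOD p-1] := by
        have h1 : (x - 1) % (p-1) ≡ x - 1 [MOD p-1] := Nat.mod_modEq _ _
        have h2 : y ≡ (x-1) + 1 [MOD p-1] := h1.add_right 1
        have h3 : x - 1 + 1 = x := by omega
        rw [h3] at h2
        exact h2.symm
      have hxu : ((x : ℕ) : ZMod (p^e)) = (((unitA g e)^i * (unitB e)^j : (ZMod (p^e))ˣ) : ZMod (p^e)) := by
        rw [← hu, IsUnit.unit_spec]
      refine ⟨((i, j), y), ?_, ?_⟩
      · simp only [mem_filter, mem_product, mem_range, mem_Icc]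
        refine ⟨⟨⟨hi, hj⟩, hy1, hy2⟩, ?_⟩
        exact (main_equiv g hg hp2 he hn hpn hx1 hy1 hxu hyx).mp hcond
      · -- X i j y = x
        have m1 : X i j y ≡ x [MOD p^e] := by
          rw [← ZMod.natCast_eq_natCast_iff]
          rw [hX1 i j y, hxu]
        have m2 : X i j y ≡ x [MOD p-1] := (hX2 i j y).trans hyx.symm
        have mL : X i j y ≡ x [MOD p^e * (p-1)] :=
          (Nat.modEq_and_modEq_iff_modEq_mul cop).mp ⟨m1, m2⟩
        exact eq_of_modeq_interval (hX0 i j y) (Nat.le_of_lt (hX3 i j y)) hx1 hx2 mL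
  rw [hbij]
  -- counting
  rw [Finset.card_filter, Finset.sum_product_right]
  have hinner : ∀ y ∈ Icc 1 (p-1),
      (∑ ij ∈ (range (p-1)) ×ˢ (range (p^(e-1))),
        if (p-1) ∣ ij.1 * (y^n - 1) ∧
            (p^(e-1) ∣ ij.2 ∨ (p^(e-1-e/2) ∣ ij.2 ∧ (p-1) ∣ ij.1 * n)) then 1 else 0)
      = Nat.gcd (p-1) (y^n-1) + Nat.gcd (p-1) (Nat.gcd n (y^n-1)) * (p^(e/2) - 1) := by
    intro y _
    rw [← Finset.card_filter]
    exact county he n (y^n - 1)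
  rw [Finset.sum_congr rfl hinner, Finset.sum_add_distrib, ← Finset.sum_mul]
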